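/- Let π(x) = a + r/(x−i) and σ(x) = b + s/(x−j) be elements of PGL(2,q) (r, s ≠ 0), with distinguished element ∞. Then hd(π^△, σ^△) = hd(π, σ) − 3 if and only if r = s and (b − a)(j − i) = r. -/

import Mathlib

open OnePoint
open scoped Classical

noncomputable def hd {Ω : Type*} (π σ : Equiv.Perm Ω) : ℕ :=
  Set.ncard {x | π x ≠ σ x}

/-- Contraction relative to the distinguished element `F`. -/
noncomputable def ctr {Ω : Type*} (F : Ω) (π : Equiv.Perm Ω) : Equiv.Perm Ω :=
  π.trans (Equiv.swap F (π F))

/-- The map `x ↦ k + r/(x - i)` on `K ∪ {∞}`, with `f ∞ = k` and `f i = ∞`. -/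
noncomputable def pform {K : Type*} [Field K] (k r i : K) (x : OnePoint K) : OnePoint K :=
  Option.elim x ((k : OnePoint K))
    (fun y => if y = i then ∞ else ((k + r / (y - i) : K) : OnePoint K))

section aux
variable {K : Type*} [Field K]

lemma pform_infty (k r i : K) : pform k r i ∞ = (k : OnePoint K) := rfl

lemma pform_coe_self (k r i : K) : pform k r i (i : OnePoint K) = ∞ := by
  show Option.elim (Option.some i) _ _ = _
  simp

lemma pform_coe (k r i : K) {x : K} (hx : x ≠ i) :
    pform k r i (x : OnePoint K) = ((k + r / (x - i) : K) : OnePoint K) := by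
  show Option.elim (Option.some x) _ _ = _
  simp [hx]

lemma ctr_apply {Ω : Type*} (F : Ω) (π : Equiv.Perm Ω) (x : Ω) :
    ctr F π x = Equiv.swap F (π F) (π x) := rfl

variable {π : Equiv.Perm (OnePoint K)} {a r i : K}

lemma ctr_infty (hπ : ∀ x, π x = pform a r i x) : ctr ∞ π ∞ = ∞ := by
  rw [ctr_apply, hπ, pform_infty, Equiv.swap_apply_right]

lemma ctr_coe_self (hπ : ∀ x, π x = pform a r i x) :
    ctr ∞ π (i : OnePoint K) = (a : OnePoint K) := by
  rw [ctr_apply, hπ, hπ, pform_infty, pform_coe_self, Equiv.swap_apply_left]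

lemma ctr_coe (hr : r ≠ 0) (hπ : ∀ x, π x = pform a r i x) {x : K} (hx : x ≠ i) :
    ctr ∞ π (x : OnePoint K) = ((a + r / (x - i) : K) : OnePoint K) := by
  rw [ctr_apply, hπ, hπ, pform_infty, pform_coe _ _ _ hx]
  refine Equiv.swap_apply_of_ne_of_ne (coe_ne_infty _) ?_
  simp only [ne_eq, coe_eq_coe]
  intro h
  have hx' : x - i ≠ 0 := sub_ne_zero.mpr hx
  have h2 : r / (x - i) = 0 := by linear_combination h
  exact hr ((div_eq_zero_iff.mp h2).resolve_right hx')

end aux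

theorem stmt12 {K : Type*} [Field K] [Fintype K] (π σ : Equiv.Perm (OnePoint K))
    (a r i b s j : K) (hr : r ≠ 0) (hs : s ≠ 0)
    (hπ : ∀ x, π x = pform a r i x) (hσ : ∀ x, σ x = pform b s j x) :
    (hd (ctr ∞ π) (ctr ∞ σ) : ℤ) = (hd π σ : ℤ) - 3 ↔
      r = s ∧ (b - a) * (j - i) = r := by
  haveI : Finite (OnePoint K) := inferInstanceAs (Finite (Option K))
  set D : Set (OnePoint K) := {x | π x ≠ σ x} with hD
  set D' : Set (OnePoint K) := {x | ctr ∞ π x ≠ ctr ∞ σ x} with hD'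
  set S : Set (OnePoint K) := {∞, (i : OnePoint K), (j : OnePoint K)} with hSdef
  have hdiff : D \ S = D' \ S := by
    ext x
    simp only [Set.mem_diff, hD, hD', Set.mem_setOf_eq, and_congr_left_iff]
    intro hxS
    cases x with
    | infty =>
        exact absurd (by simp [hSdef] : (∞ : OnePoint K) ∈ S) hxS
    | coe y =>
        have hyi : y ≠ i := fun h => hxS (by simp [hSdef, h])
        have hyj : y ≠ j := fun h => hxS (by simp [hSdef, h])
        have h1 : π (y : OnePoint K) = ctr ∞ π (y : OnePoint K) := by
          rw [hπ, pform_coe _ _ _ hyi, ctr_coe hr hπ hyi]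
        have h2 : σ (y : OnePoint K) = ctr ∞ σ (y : OnePoint K) := by
          rw [hσ, pform_coe _ _ _ hyj, ctr_coe hs hσ hyj]
        rw [h1, h2]
  have e1 : hd π σ = (D ∩ S).ncard + (D \ S).ncard := by
    rw [← Set.ncard_union_eq (Set.disjoint_left.mpr fun x hx hx2 => hx2.2 hx.2)
      (Set.toFinite _) (Set.toFinite _), Set.inter_union_diff]
    rfl
  have e2 : hd (ctr ∞ π) (ctr ∞ σ) = (D' ∩ S).ncard + (D \ S).ncard := by
    rw [hdiff, ← Set.ncard_union_eq (Set.disjoint_left.mpr fun x hx hx2 => hx2.2 hx.2)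
      (Set.toFinite _) (Set.toFinite _), Set.inter_union_diff]
    rfl
  have hS3 : S.ncard ≤ 3 := by
    calc S.ncard ≤ ({(i : OnePoint K), (j : OnePoint K)} : Set (OnePoint K)).ncard + 1 :=
          Set.ncard_insert_le _ _
      _ ≤ (({(j : OnePoint K)} : Set (OnePoint K)).ncard + 1) + 1 :=
          Nat.add_le_add_right (Set.ncard_insert_le _ _) 1
      _ ≤ 3 := by rw [Set.ncard_singleton]
  have b1 : (D ∩ S).ncard ≤ 3 :=
    le_trans (Set.ncard_le_ncard Set.inter_subset_right (Set.toFinite _)) hS3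
  have key : (hd (ctr ∞ π) (ctr ∞ σ) : ℤ) = (hd π σ : ℤ) - 3 ↔
      ((D ∩ S).ncard = 3 ∧ (D' ∩ S).ncard = 0) := by
    rw [e1, e2]
    constructor <;> intro h
    · constructor <;> omega
    · omega
  rw [key]
  constructor
  · rintro ⟨h3, h0⟩
    have hij : i ≠ j := by
      intro hij
      subst hij
      have hle : S.ncard ≤ 2 := by
        have hSS : S = {∞, (i : OnePoint K)} := by
          rw [hSdef]; simp [Set.insert_comm]
        rw [hSS]
        calc ({∞, (i : OnePoint K)} : Set (OnePoint K)).ncard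
            ≤ ({(i : OnePoint K)} : Set (OnePoint K)).ncard + 1 := Set.ncard_insert_le _ _
          _ ≤ 2 := by rw [Set.ncard_singleton]
      have hb : (D ∩ S).ncard ≤ 2 :=
        le_trans (Set.ncard_le_ncard Set.inter_subset_right (Set.toFinite _)) hle
      omega
    have hempty : D' ∩ S = ∅ := (Set.ncard_eq_zero (Set.toFinite _)).mp h0
    have hji : j ≠ i := fun h => hij h.symm
    have hiS : (i : OnePoint K) ∈ S := by simp [hSdef]
    have hjS : (j : OnePoint K) ∈ S := by simp [hSdef]
    have hci : ctr ∞ π (i : OnePoint K) = ctr ∞ σ (i : OnePoint K) := by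
      by_contra hc
      exact absurd hempty (Set.nonempty_iff_ne_empty.mp ⟨(i : OnePoint K), ⟨hc, hiS⟩⟩)
    have hcj : ctr ∞ π (j : OnePoint K) = ctr ∞ σ (j : OnePoint K) := by
      by_contra hc
      exact absurd hempty (Set.nonempty_iff_ne_empty.mp ⟨(j : OnePoint K), ⟨hc, hjS⟩⟩)
    rw [ctr_coe_self hπ, ctr_coe hs hσ hij] at hci
    rw [ctr_coe hr hπ hji, ctr_coe_self hσ] at hcj
    rw [coe_eq_coe] at hci hcj
    have hij' : i - j ≠ 0 := sub_ne_zero.mpr hij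
    have hji' : j - i ≠ 0 := sub_ne_zero.mpr hji
    field_simp at hci hcj
    exact ⟨by linear_combination hci + hcj, by linear_combination -hcj⟩
  · rintro ⟨hrs, hcond⟩
    have hba : b - a ≠ 0 := fun h => hr (by rw [← hcond, h, zero_mul])
    have hji' : j - i ≠ 0 := fun h => hr (by rw [← hcond, h, mul_zero])
    have hij : i ≠ j := fun h => hji' (by rw [h, sub_self])
    have hji : j ≠ i := fun h => hij h.symm
    have hab : a ≠ b := fun h => hba (by rw [h, sub_self])
    have hij' : i - j ≠ 0 := sub_ne_zero.mpr hij
    constructor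
    · have hDS : S ⊆ D := by
        intro x hx
        have hx' : x = ∞ ∨ x = (i : OnePoint K) ∨ x = (j : OnePoint K) := by
          simpa [hSdef] using hx
        rcases hx' with h | h | h <;> subst h
        · show π ∞ ≠ σ ∞
          rw [hπ, hσ, pform_infty, pform_infty]
          simpa using hab
        · show π (i : OnePoint K) ≠ σ (i : OnePoint K)
          rw [hπ, hσ, pform_coe_self, pform_coe _ _ _ hij]
          exact (infty_ne_coe _)
        · show π (j : OnePoint K) ≠ σ (j : OnePoint K)
          rw [hπ, hσ, pform_coe_self, pform_coe _ _ _ hji]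
          exact (coe_ne_infty _)
      have hinter : D ∩ S = S := Set.inter_eq_self_of_subset_right hDS
      rw [hinter]
      refine Set.ncard_eq_three.mpr ⟨∞, (i : OnePoint K), (j : OnePoint K), ?_, ?_, ?_, rfl⟩
      · exact (infty_ne_coe _)
      · exact (infty_ne_coe _)
      · simpa using hij
    · rw [Set.ncard_eq_zero (Set.toFinite _)]
      rw [Set.eq_empty_iff_forall_notMem]
      rintro x ⟨hx1, hx2⟩
      have hx' : x = ∞ ∨ x = (i : OnePoint K) ∨ x = (j : OnePoint K) := by
        simpa [hSdef] using hx2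
      rcases hx' with h | h | h <;> subst h
      · exact hx1 (by rw [ctr_infty hπ, ctr_infty hσ])
      · refine hx1 ?_
        rw [ctr_coe_self hπ, ctr_coe hs hσ hij, coe_eq_coe]
        have hsv : s = (a - b) * (i - j) := by rw [← hrs, ← hcond]; ring
        rw [hsv, mul_div_cancel_right₀ _ hij']
        ring
      · refine hx1 ?_
        rw [ctr_coe hr hπ hji, ctr_coe_self hσ, coe_eq_coe]
        have hrv : r = (b - a) * (j - i) := hcond.symm
        rw [hrv, mul_div_cancel_right₀ _ hji']
        ring
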